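/- Let b ≥ 1 and k ≥ 0 be integers, α a real number, and a_1,…,a_b natural numbers. Then ∑ over all tuples (j_1,…,j_b) of natural numbers with j_1+⋯+j_b = k of ∏_{m=1}^{b} C(a_m + j_m + α − 1, j_m) equals C(a_1+⋯+a_b + bα + k − 1, k). In particular, if a_1+⋯+a_b = b−1 (as holds for the out-degrees of the b nodes of a tree of size b) the sum equals C(b + bα + k − 2, k), which yields the degree-weight φ_k = T_b·C(b+bα+k−2, k) of the weight-preserving bucketing of generalized plane-oriented recursive trees with degree weights φ_k = C(k+α−1, k). -/

import Mathlib

/-- The generalized binomial coefficient `C(x, n) = x(x-1)⋯(x-n+1)/n!`. -/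
noncomputable def genBinom (x : ℝ) (n : ℕ) : ℝ :=
    (∏ i ∈ Finset.range n, (x - i)) / (n.factorial : ℝ)

open Polynomial Finset in
private lemma descPoch_prod' (x : ℝ) (n : ℕ) :
    (descPochhammer ℤ n).smeval x = ∏ i ∈ Finset.range n, (x - i) := by
  induction n with
  | zero => simp [descPochhammer_zero, smeval_one]
  | succ n ih =>
    rw [descPochhammer_succ_right, smeval_mul, ih, prod_range_succ]
    congr 1
    simp [smeval_sub, smeval_X, smeval_natCast]

private lemma genBinom_eq_choose' (x : ℝ) (n : ℕ) : genBinom x n = Ring.choose x n := by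
  have h := Ring.descPochhammer_eq_factorial_smul_choose (R := ℝ) x n
  rw [descPoch_prod'] at h
  rw [genBinom, h, nsmul_eq_mul]
  field_simp

private lemma sum_antidiagonalTuple_succ' {M : Type*} [AddCommMonoid M] (b k : ℕ)
    (g : (Fin (b + 1) → ℕ) → M) :
    ∑ f ∈ Finset.Nat.antidiagonalTuple (b + 1) k, g f =
      ∑ ij ∈ Finset.HasAntidiagonal.antidiagonal k, ∑ f ∈ Finset.Nat.antidiagonalTuple b ij.2,
        g (Fin.cons ij.1 f) := by
  rw [Finset.sum_sigma']
  refine (Finset.sum_nbij' (fun f : Fin (b + 1) → ℕ =>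
      (⟨(f 0, ∑ i : Fin b, f i.succ), Fin.tail f⟩ :
      (_ : ℕ × ℕ) × (Fin b → ℕ))) (fun p => Fin.cons p.1.1 p.2) ?_ ?_ ?_ ?_ ?_)
  · intro f hf
    simp only [Finset.Nat.mem_antidiagonalTuple, Fin.sum_univ_succ] at hf
    simp only [Finset.mem_sigma, Finset.HasAntidiagonal.mem_antidiagonal,
      Finset.Nat.mem_antidiagonalTuple]
    exact ⟨hf, rfl⟩
  · rintro ⟨⟨i, j⟩, f⟩ hp
    simp only [Finset.mem_sigma, Finset.HasAntidiagonal.mem_antidiagonal,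
      Finset.Nat.mem_antidiagonalTuple] at hp ⊢
    rw [Fin.sum_cons, hp.2, hp.1]
  · intro f hf
    simp [Fin.cons_self_tail]
  · rintro ⟨⟨i, j⟩, f⟩ hp
    simp only [Finset.mem_sigma, Finset.HasAntidiagonal.mem_antidiagonal,
      Finset.Nat.mem_antidiagonalTuple] at hp
    simp [Fin.tail_cons, Fin.cons_succ, hp.2]
  · intro f hf
    simp [Fin.cons_self_tail]

private lemma multi_vandermonde' (b : ℕ) (x : Fin b → ℝ) (k : ℕ) :
    ∑ j ∈ Finset.Nat.antidiagonalTuple b k, ∏ m : Fin b, Ring.choose (x m) (j m)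
      = Ring.choose (∑ m : Fin b, x m) k := by
  induction b generalizing k with
  | zero =>
    cases k with
    | zero => simp [Finset.Nat.antidiagonalTuple_zero_zero, Ring.choose_zero_right]
    | succ k =>
      simp [Finset.Nat.antidiagonalTuple_zero_succ, Ring.choose_zero_succ]
  | succ b ih =>
    rw [sum_antidiagonalTuple_succ', Fin.sum_univ_succ,
      Ring.add_choose_eq _ (Commute.all _ _)]
    refine Finset.sum_congr rfl fun ij _ => ?_
    rw [← ih (fun m => x m.succ) ij.2, Finset.mul_sum]
    refine Finset.sum_congr rfl fun f _ => ?_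
    rw [Fin.prod_univ_succ]
    simp [Fin.cons_succ]

private lemma genBinom_flip' (y : ℝ) (j : ℕ) :
    genBinom (y + j - 1) j = (-1) ^ j * genBinom (-y) j := by
  unfold genBinom
  rw [← mul_div_assoc]
  congr 1
  have h1 : ∏ i ∈ Finset.range j, (y + (j : ℝ) - 1 - i)
      = ∏ i ∈ Finset.range j, (y + i) := by
    rw [← Finset.prod_range_reflect (fun i : ℕ => y + i) j]
    refine Finset.prod_congr rfl fun i hi => ?_
    rw [Finset.mem_range] at hi
    have h2 : ((j - 1 - i : ℕ) : ℝ) = (j : ℝ) - 1 - i := by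
      rw [Nat.cast_sub (by omega), Nat.cast_sub (by omega : 1 ≤ j)]
      push_cast
      ring
    simp only [h2]
    ring
  rw [h1]
  have h3 : ∀ i ∈ Finset.range j, y + (i : ℝ) = (-1) * (-y - i) := by
    intro i _; ring
  rw [Finset.prod_congr rfl h3, Finset.prod_mul_distrib, Finset.prod_const,
    Finset.card_range]

/-- For integers `b ≥ 1`, `k ≥ 0`, a real `α` and natural numbers `a_1, …, a_b`, the sum over all
tuples `(j_1, …, j_b)` of natural numbers with `j_1 + ⋯ + j_b = k` of
`∏_{m=1}^{b} C(a_m + j_m + α - 1, j_m)` equals `C(a_1+⋯+a_b + bα + k - 1, k)`.  In particular,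
if `a_1 + ⋯ + a_b = b - 1` the sum equals `C(b + bα + k - 2, k)`, yielding the degree weights of
the weight-preserving bucketing of generalized plane-oriented recursive trees. -/
theorem vandermonde_convolution_bundles (b : ℕ) (hb : 1 ≤ b) (k : ℕ) (α : ℝ)
    (a : Fin b → ℕ) :
    (∑ j ∈ Finset.Nat.antidiagonalTuple b k,
        ∏ m : Fin b, genBinom ((a m : ℝ) + (j m : ℝ) + α - 1) (j m)
      = genBinom (((∑ m : Fin b, a m : ℕ) : ℝ) + (b : ℝ) * α + (k : ℝ) - 1) k) ∧
    ((∑ m : Fin b, a m) = b - 1 →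
      ∑ j ∈ Finset.Nat.antidiagonalTuple b k,
          ∏ m : Fin b, genBinom ((a m : ℝ) + (j m : ℝ) + α - 1) (j m)
        = genBinom ((b : ℝ) + (b : ℝ) * α + (k : ℝ) - 2) k) := by
  set y : Fin b → ℝ := fun m => (a m : ℝ) + α with hy
  have hsumy : ∑ m : Fin b, y m = ((∑ m : Fin b, a m : ℕ) : ℝ) + (b : ℝ) * α := by
    simp [hy, Finset.sum_add_distrib, mul_comm]
  have main : ∑ j ∈ Finset.Nat.antidiagonalTuple b k,
      ∏ m : Fin b, genBinom ((a m : ℝ) + (j m : ℝ) + α - 1) (j m)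
      = genBinom (((∑ m : Fin b, a m : ℕ) : ℝ) + (b : ℝ) * α + (k : ℝ) - 1) k := by
    have hterm : ∀ j ∈ Finset.Nat.antidiagonalTuple b k,
        ∏ m : Fin b, genBinom ((a m : ℝ) + (j m : ℝ) + α - 1) (j m)
          = (-1) ^ k * ∏ m : Fin b, Ring.choose (-(y m)) (j m) := by
      intro j hj
      rw [Finset.Nat.mem_antidiagonalTuple] at hj
      have : ∀ m : Fin b, genBinom ((a m : ℝ) + (j m : ℝ) + α - 1) (j m)
          = (-1) ^ (j m) * Ring.choose (-(y m)) (j m) := by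
        intro m
        have harg : (a m : ℝ) + (j m : ℝ) + α - 1 = y m + (j m : ℝ) - 1 := by
          simp [hy]; ring
        rw [harg, genBinom_flip', genBinom_eq_choose']
      simp only [this]
      rw [Finset.prod_mul_distrib, Finset.prod_pow_eq_pow_sum, hj]
    rw [Finset.sum_congr rfl hterm, ← Finset.mul_sum, multi_vandermonde',
      Finset.sum_neg_distrib, hsumy, genBinom_flip', genBinom_eq_choose']
  refine ⟨main, fun hsa => ?_⟩
  rw [main, hsa]
  congr 1
  rw [Nat.cast_sub hb]
  push_cast
  ring
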